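/- Let Y be a proper metric space, let G be a group acting on Y by isometries, and let y ∈ Y. Suppose the orbit G·y is a closed subset of Y, is geodesic in Y, and is not compact. Then Y contains a line through y whose image is contained in G·y; that is, there is an isometric embedding ℓ : ℝ → Y with ℓ(0) = y and ℓ(ℝ) ⊆ G·y. -/

import Mathlib

/-- A minimizing geodesic from `p` to `q` in a metric space: an isometric embedding of
`[0, dist p q]` sending `0` to `p` and `dist p q` to `q`. -/
def IsMinGeodesic {X : Type*} [MetricSpace X] (c : ℝ → X) (p q : X) : Prop :=
  c 0 = p ∧ c (dist p q) = q ∧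
    ∀ s ∈ Set.Icc (0 : ℝ) (dist p q), ∀ t ∈ Set.Icc (0 : ℝ) (dist p q),
      dist (c s) (c t) = |s - t|

/-- A subset `S` of a metric space `X` is geodesic in `X` if any two points of `S` are
joined by a minimal geodesic of `X` contained in `S`. -/
def IsGeodesicIn {X : Type*} [MetricSpace X] (S : Set X) : Prop :=
  ∀ p ∈ S, ∀ q ∈ S, ∃ c : ℝ → X, IsMinGeodesic c p q ∧
    ∀ t ∈ Set.Icc (0 : ℝ) (dist p q), c t ∈ S

open Filter Topology Metric

/-- If a group `G` acts by isometries on a proper metric space `Y` and the orbit `G · y` is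
closed, geodesic in `Y` and non-compact, then there is a line through `y` contained in the
orbit. -/
theorem stmt_1 {Y : Type*} [MetricSpace Y] [ProperSpace Y]
    {G : Type*} [Group G] [MulAction G Y]
    (hiso : ∀ g : G, Isometry (fun z : Y => g • z)) (y : Y)
    (hclosed : IsClosed (MulAction.orbit G y))
    (hgeo : IsGeodesicIn (MulAction.orbit G y))
    (hnoncpt : ¬ IsCompact (MulAction.orbit G y)) :
    ∃ ℓ : ℝ → Y, Isometry ℓ ∧ ℓ 0 = y ∧ Set.range ℓ ⊆ MulAction.orbit G y := by
  classical
  set O := MulAction.orbit G y with hO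
  have horb : ∀ g : G, ∀ z ∈ O, g • z ∈ O := by
    intro g z hz
    obtain ⟨h, rfl⟩ := hz
    exact ⟨g * h, by simp [mul_smul]⟩
  -- the orbit is unbounded
  have hub : ¬ Bornology.IsBounded O := fun hb =>
    hnoncpt (Metric.isCompact_of_isClosed_isBounded hclosed hb)
  have hfar : ∀ R : ℝ, ∃ z ∈ O, R < dist y z := by
    intro R
    by_contra h
    push_neg at h
    exact hub ((Metric.isBounded_iff_subset_closedBall y).2
      ⟨R, fun z hz => by simpa [Metric.mem_closedBall, dist_comm] using h z hz⟩)
  -- for each `n`, a segment `[-n, n] → O` through `y`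
  have hseg : ∀ n : ℕ, ∃ c : ℝ → Y, c 0 = y ∧
      (∀ s ∈ Set.Icc (-(n:ℝ)) n, ∀ t ∈ Set.Icc (-(n:ℝ)) n, dist (c s) (c t) = |s - t|) ∧
      (∀ t ∈ Set.Icc (-(n:ℝ)) n, c t ∈ O) := by
    intro n
    obtain ⟨z, hz, hdz⟩ := hfar (2 * n)
    obtain ⟨c, ⟨hc0, hcL, hciso⟩, hcmem⟩ := hgeo y (MulAction.mem_orbit_self y) z hz
    have hnL : (n:ℝ) ∈ Set.Icc (0:ℝ) (dist y z) :=
      ⟨Nat.cast_nonneg n, by have := Nat.cast_nonneg (α := ℝ) n; linarith⟩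
    obtain ⟨g, hg⟩ := hcmem _ hnL
    have hIcc : ∀ s : ℝ, s ∈ Set.Icc (-(n:ℝ)) n → s + n ∈ Set.Icc (0:ℝ) (dist y z) := by
      intro s hs
      exact ⟨by linarith [hs.1], by linarith [hs.2]⟩
    refine ⟨fun t => g⁻¹ • c (t + n), ?_, ?_, ?_⟩
    · simp only [zero_add]
      rw [← hg, inv_smul_smul]
    · intro s hs t ht
      have := (hiso g⁻¹).dist_eq (c (s + n)) (c (t + n))
      rw [this, hciso _ (hIcc s hs) _ (hIcc t ht)]
      ring_nf
    · intro t ht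
      exact horb g⁻¹ _ (hcmem _ (hIcc t ht))
  choose seg hseg0 hsegiso hsegmem using hseg
  -- clamped versions, defined on all of ℚ
  set clamp : ℕ → ℝ → ℝ := fun n t => max (-(n:ℝ)) (min n t) with hclamp
  have hclamp_mem : ∀ (n : ℕ) (t : ℝ), clamp n t ∈ Set.Icc (-(n:ℝ)) n := by
    intro n t
    refine ⟨le_max_left _ _, max_le (by have := Nat.cast_nonneg (α := ℝ) n; linarith)
      (min_le_left _ _)⟩
  have hclamp_eq : ∀ (n : ℕ) (t : ℝ), |t| ≤ n → clamp n t = t := by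
    intro n t ht
    have h1 : t ≤ n := le_trans (le_abs_self t) ht
    have h2 : -(n:ℝ) ≤ t := by have := neg_abs_le t; linarith
    simp [hclamp, min_eq_right h1, max_eq_right h2]
  have hclamp_abs : ∀ (n : ℕ) (t : ℝ), |clamp n t| ≤ |t| := by
    intro n t
    rw [abs_le]
    constructor
    · exact le_max_of_le_right (le_min
        ((neg_nonpos_of_nonneg (abs_nonneg t)).trans (Nat.cast_nonneg n)) (neg_abs_le t))
    · exact max_le ((neg_nonpos_of_nonneg (Nat.cast_nonneg n)).trans (abs_nonneg t))
        (le_trans (min_le_right _ _) (le_abs_self t))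
  set F : ℕ → ℚ → Y := fun n q => seg n (clamp n q) with hF
  have hF0 : ∀ n, F n 0 = y := by
    intro n
    have h : clamp n (0:ℝ) = 0 := hclamp_eq n 0 (by simp)
    simp only [hF, Rat.cast_zero, h, hseg0]
  have hFmem : ∀ n q, F n q ∈ O := fun n q => hsegmem n _ (hclamp_mem n _)
  have hFball : ∀ (n : ℕ) (q : ℚ), F n q ∈ Metric.closedBall y |(q:ℝ)| := by
    intro n q
    rw [Metric.mem_closedBall, dist_comm]
    have h0 : (0:ℝ) ∈ Set.Icc (-(n:ℝ)) n :=
      ⟨neg_nonpos_of_nonneg (Nat.cast_nonneg n), Nat.cast_nonneg n⟩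
    have := hsegiso n 0 h0 _ (hclamp_mem n (q:ℝ))
    rw [← hseg0 n]
    rw [this]
    rw [zero_sub, abs_neg]
    exact hclamp_abs n _
  -- sequential compactness: extract a pointwise limit on ℚ
  have hScpt : IsCompact (Set.univ.pi fun q : ℚ => Metric.closedBall y |(q:ℝ)|) :=
    isCompact_univ_pi fun q => isCompact_closedBall y _
  obtain ⟨f, hfS, φ, hφ, hconv⟩ :=
    hScpt.isSeqCompact (x := F) (fun n => by intro q _; exact hFball n q)
  have hptwise : ∀ q : ℚ, Tendsto (fun n => F (φ n) q) atTop (𝓝 (f q)) := by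
    intro q
    exact (tendsto_pi_nhds.1 hconv) q
  have hf0 : f 0 = y := by
    have h1 : Tendsto (fun n => F (φ n) (0:ℚ)) atTop (𝓝 y) := by
      simp only [hF0]; exact tendsto_const_nhds
    exact tendsto_nhds_unique (hptwise 0) h1
  have hfdist : ∀ q r : ℚ, dist (f q) (f r) = |(q:ℝ) - r| := by
    intro q r
    have hev : ∀ᶠ n in atTop, dist (F (φ n) q) (F (φ n) r) = |(q:ℝ) - r| := by
      filter_upwards [eventually_ge_atTop ⌈max |(q:ℝ)| |(r:ℝ)|⌉₊] with n hn
      have hn' : max |(q:ℝ)| |(r:ℝ)| ≤ (φ n : ℝ) := by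
        calc max |(q:ℝ)| |(r:ℝ)| ≤ (⌈max |(q:ℝ)| |(r:ℝ)|⌉₊ : ℝ) := Nat.le_ceil _
        _ ≤ (n : ℝ) := Nat.cast_le.2 hn
        _ ≤ (φ n : ℝ) := Nat.cast_le.2 (hφ.le_apply)
      have hq : clamp (φ n) (q:ℝ) = (q:ℝ) :=
        hclamp_eq _ _ (le_trans (le_max_left _ _) hn')
      have hr : clamp (φ n) (r:ℝ) = (r:ℝ) :=
        hclamp_eq _ _ (le_trans (le_max_right _ _) hn')
      have hqm : (q:ℝ) ∈ Set.Icc (-(φ n : ℝ)) (φ n) := by rw [← hq]; exact hclamp_mem _ _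
      have hrm : (r:ℝ) ∈ Set.Icc (-(φ n : ℝ)) (φ n) := by rw [← hr]; exact hclamp_mem _ _
      simp only [hF, hq, hr]
      exact hsegiso _ _ hqm _ hrm
    have h1 : Tendsto (fun n => dist (F (φ n) q) (F (φ n) r)) atTop (𝓝 (dist (f q) (f r))) :=
      (hptwise q).dist (hptwise r)
    have h2 : Tendsto (fun n => dist (F (φ n) q) (F (φ n) r)) atTop (𝓝 |(q:ℝ) - r|) :=
      Tendsto.congr' (by filter_upwards [hev] with n h using h.symm) tendsto_const_nhds
    exact tendsto_nhds_unique h1 h2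
  have hfmem : ∀ q : ℚ, f q ∈ O :=
    fun q => hclosed.mem_of_tendsto (hptwise q) (Eventually.of_forall fun n => hFmem _ q)
  -- extend `f` to ℝ by completeness
  have happ : ∀ (t : ℝ) (k : ℕ), ∃ q : ℚ, |t - q| < 1 / (k + 1) :=
    fun t k => exists_rat_near t (by positivity)
  choose app happ' using happ
  have happt : ∀ t : ℝ, Tendsto (fun k => ((app t k : ℚ) : ℝ)) atTop (𝓝 t) := by
    intro t
    rw [tendsto_iff_dist_tendsto_zero]
    refine squeeze_zero (fun k => dist_nonneg) (fun k => ?_) tendsto_one_div_add_atTop_nhds_zero_nat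
    rw [Real.dist_eq, abs_sub_comm]
    exact (happ' t k).le
  have hC : ∀ t : ℝ, ∃ p : Y, Tendsto (fun k => f (app t k)) atTop (𝓝 p) := by
    intro t
    apply cauchySeq_tendsto_of_complete
    have hc : CauchySeq (fun k => ((app t k : ℚ) : ℝ)) := (happt t).cauchySeq
    rw [Metric.cauchySeq_iff] at hc ⊢
    intro ε hε
    obtain ⟨N, hN⟩ := hc ε hε
    refine ⟨N, fun m hm n hn => ?_⟩
    rw [hfdist]
    have := hN m hm n hn
    rwa [Real.dist_eq] at this
  choose ℓ hℓ using hC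
  refine ⟨ℓ, Isometry.of_dist_eq fun s t => ?_, ?_, ?_⟩
  · have h1 : Tendsto (fun k => dist (f (app s k)) (f (app t k))) atTop
        (𝓝 (dist (ℓ s) (ℓ t))) := (hℓ s).dist (hℓ t)
    have h2 : Tendsto (fun k => dist (f (app s k)) (f (app t k))) atTop (𝓝 (dist s t)) := by
      have h3 : Tendsto (fun k => dist ((app s k : ℝ)) ((app t k : ℝ))) atTop (𝓝 (dist s t)) :=
        (happt s).dist (happt t)
      refine h3.congr fun k => ?_
      rw [hfdist, Real.dist_eq]
    exact tendsto_nhds_unique h1 h2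
  · have h1 : Tendsto (fun k => f (app 0 k)) atTop (𝓝 y) := by
      rw [tendsto_iff_dist_tendsto_zero]
      refine squeeze_zero (fun k => dist_nonneg) (fun k => ?_)
        tendsto_one_div_add_atTop_nhds_zero_nat
      rw [← hf0, hfdist]
      have := (happ' 0 k).le
      rw [zero_sub, abs_neg] at this
      push_cast
      simpa using this
    exact tendsto_nhds_unique (hℓ 0) h1
  · rintro _ ⟨t, rfl⟩
    exact hclosed.mem_of_tendsto (hℓ t) (Eventually.of_forall fun k => hfmem _)
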